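/- arXiv:2501.16262 — 2 statements merged into one kernel-verified Lean document; each statement's English description precedes it below -/
import Mathlib

section
/- For real skew-symmetric n×n matrices A and B, the operator norm of exp(A) − exp(B) is at most the operator norm of A − B. -/
open Matrix

open scoped Matrix.Norms.L2Operator

/-- Difference of powers bound in a normed ring. -/
lemma aux_pow_sub_pow {𝔸 : Type*} [NormedRing 𝔸] (X Y : 𝔸) (k : ℕ) :
    ‖X ^ (k + 1) - Y ^ (k + 1)‖ ≤ (k + 1) * (max ‖X‖ ‖Y‖) ^ k * ‖X - Y‖ := by
  set M := max ‖X‖ ‖Y‖ with hM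
  have hX : ‖X‖ ≤ M := le_max_left _ _
  have hY : ‖Y‖ ≤ M := le_max_right _ _
  have hM0 : 0 ≤ M := le_trans (norm_nonneg X) hX
  induction k with
  | zero => simpa using le_refl ‖X - Y‖
  | succ k ih =>
    have key : X ^ (k + 2) - Y ^ (k + 2)
        = X * (X ^ (k + 1) - Y ^ (k + 1)) + (X - Y) * Y ^ (k + 1) := by
      rw [mul_sub, sub_mul, ← pow_succ', ← pow_succ']
      abel
    have h1 : ‖X * (X ^ (k + 1) - Y ^ (k + 1))‖ ≤ M * ((k + 1) * M ^ k * ‖X - Y‖) := by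
      calc ‖X * (X ^ (k + 1) - Y ^ (k + 1))‖ ≤ ‖X‖ * ‖X ^ (k + 1) - Y ^ (k + 1)‖ :=
            norm_mul_le _ _
        _ ≤ M * ((k + 1) * M ^ k * ‖X - Y‖) := by
            apply mul_le_mul hX ih (norm_nonneg _) hM0
    have h2 : ‖(X - Y) * Y ^ (k + 1)‖ ≤ ‖X - Y‖ * M ^ (k + 1) := by
      calc ‖(X - Y) * Y ^ (k + 1)‖ ≤ ‖X - Y‖ * ‖Y ^ (k + 1)‖ := norm_mul_le _ _
        _ ≤ ‖X - Y‖ * M ^ (k + 1) := by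
            apply mul_le_mul_of_nonneg_left _ (norm_nonneg _)
            exact le_trans (norm_pow_le' Y (Nat.succ_pos k)) (pow_le_pow_left₀ (norm_nonneg _) hY _)
    calc ‖X ^ (k + 2) - Y ^ (k + 2)‖
        ≤ ‖X * (X ^ (k + 1) - Y ^ (k + 1))‖ + ‖(X - Y) * Y ^ (k + 1)‖ := by
          rw [key]; exact norm_add_le _ _
      _ ≤ M * ((k + 1) * M ^ k * ‖X - Y‖) + ‖X - Y‖ * M ^ (k + 1) := add_le_add h1 h2
      _ = ((((k:ℕ) + 1 : ℕ) : ℝ) + 1) * M ^ (k + 1) * ‖X - Y‖ := by push_cast; ring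

/-- Lipschitz-type bound for the exponential in a Banach algebra. -/
lemma aux_exp_sub_exp {𝔸 : Type*} [NormedRing 𝔸] [NormedAlgebra ℝ 𝔸] [CompleteSpace 𝔸]
    (X Y : 𝔸) :
    ‖NormedSpace.exp X - NormedSpace.exp Y‖ ≤ Real.exp (max ‖X‖ ‖Y‖) * ‖X - Y‖ := by
  set M := max ‖X‖ ‖Y‖ with hMdef
  have hM0 : 0 ≤ M := le_trans (norm_nonneg X) (le_max_left _ _)
  have hX := NormedSpace.exp_series_hasSum_exp' (𝕂 := ℝ) X
  have hY := NormedSpace.exp_series_hasSum_exp' (𝕂 := ℝ) Y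
  have hsub : HasSum (fun n : ℕ => ((n.factorial : ℝ)⁻¹ • X ^ n - (n.factorial : ℝ)⁻¹ • Y ^ n))
      (NormedSpace.exp X - NormedSpace.exp Y) := hX.sub hY
  -- the majorant series
  set g : ℕ → ℝ := fun n => ((n.factorial : ℝ)⁻¹ * (n : ℝ) * M ^ (n - 1)) * ‖X - Y‖ with hg
  have hgsucc : ∀ k : ℕ, g (k + 1) = ((k.factorial : ℝ)⁻¹ * M ^ k) * ‖X - Y‖ := by
    intro k
    have : ((k + 1).factorial : ℝ) = (k + 1) * k.factorial := by
      rw [Nat.factorial_succ]; push_cast; ring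
    simp only [hg, this, Nat.add_sub_cancel]
    have hk1 : ((k : ℝ) + 1) ≠ 0 := by positivity
    have hkf : (k.factorial : ℝ) ≠ 0 := Nat.cast_ne_zero.mpr k.factorial_ne_zero
    field_simp
    push_cast
    ring
  have hexpM : HasSum (fun n : ℕ => ((n.factorial : ℝ)⁻¹ * M ^ n) * ‖X - Y‖)
      (Real.exp M * ‖X - Y‖) := by
    have := NormedSpace.exp_series_hasSum_exp' (𝕂 := ℝ) (M : ℝ)
    rw [← Real.exp_eq_exp_ℝ] at this
    simpa [smul_eq_mul] using this.mul_right ‖X - Y‖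
  have hgsum : HasSum g (Real.exp M * ‖X - Y‖) := by
    have h1 : HasSum (fun n : ℕ => g (n + 1)) (Real.exp M * ‖X - Y‖) := by
      simpa only [hgsucc] using hexpM
    have h0 : g 0 = 0 := by simp [hg]
    have h2 : HasSum (fun n : ℕ => g (n + 1)) (Real.exp M * ‖X - Y‖ - ∑ i ∈ Finset.range 1, g i) := by
      simpa [h0] using h1
    exact (hasSum_nat_add_iff' (f := g) 1).mp h2
  have hbound : ∀ n : ℕ,
      ‖(n.factorial : ℝ)⁻¹ • X ^ n - (n.factorial : ℝ)⁻¹ • Y ^ n‖ ≤ g n := by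
    intro n
    rw [← smul_sub, norm_smul]
    cases n with
    | zero => simp [hg]
    | succ k =>
      have h1 : ‖((k + 1).factorial : ℝ)⁻¹‖ = ((k + 1).factorial : ℝ)⁻¹ := by
        rw [Real.norm_eq_abs, abs_of_nonneg]; positivity
      rw [h1]
      have h2 := aux_pow_sub_pow X Y k
      have h3 : (0 : ℝ) ≤ ((k + 1).factorial : ℝ)⁻¹ := by positivity
      calc ((k + 1).factorial : ℝ)⁻¹ * ‖X ^ (k + 1) - Y ^ (k + 1)‖
          ≤ ((k + 1).factorial : ℝ)⁻¹ * ((k + 1) * M ^ k * ‖X - Y‖) :=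
            mul_le_mul_of_nonneg_left h2 h3
        _ = g (k + 1) := by
            simp only [hg, Nat.add_sub_cancel]
            push_cast
            ring
  have := tsum_of_norm_bounded hgsum hbound
  rwa [hsub.tsum_eq] at this

/-- For real skew-symmetric matrices `A`, `B`, one has
`‖exp(A) − exp(B)‖ ≤ ‖A − B‖` in the operator norm. -/
theorem exp_skew_lipschitz {n : ℕ} (A B : Matrix (Fin n) (Fin n) ℝ)
    (hA : Aᵀ = -A) (hB : Bᵀ = -B) :
    ‖NormedSpace.exp A - NormedSpace.exp B‖ ≤ ‖A - B‖ := by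
  rcases Nat.eq_zero_or_pos n with hn | hn
  · subst hn
    have : NormedSpace.exp A = NormedSpace.exp B := by
      congr 1
      exact Subsingleton.elim A B
    rw [this, sub_self, norm_zero]
    exact norm_nonneg _
  · haveI : Nontrivial (Matrix (Fin n) (Fin n) ℝ) := by
      refine ⟨0, 1, fun h => ?_⟩
      have := congrFun (congrFun h ⟨0, hn⟩) ⟨0, hn⟩
      simp [Matrix.one_apply] at this
    letI : NormedAlgebra ℚ (Matrix (Fin n) (Fin n) ℝ) :=
      NormedAlgebra.restrictScalars ℚ ℝ (Matrix (Fin n) (Fin n) ℝ)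
    -- skew matrices give unitary exponentials of norm one
    have norm_exp_eq_one : ∀ C : Matrix (Fin n) (Fin n) ℝ, Cᵀ = -C →
        ‖NormedSpace.exp C‖ = 1 := by
      intro C hC
      have hmem : C ∈ skewAdjoint (Matrix (Fin n) (Fin n) ℝ) := by
        rw [skewAdjoint.mem_iff]
        have : star C = Cᵀ := by
          ext i j
          simp [Matrix.star_apply]
        rw [this, hC]
      exact CStarRing.norm_of_mem_unitary
        (NormedSpace.exp_mem_unitary_of_mem_skewAdjoint hmem)
    set M := max ‖A‖ ‖B‖ with hMdef
    have hM0 : 0 ≤ M := le_trans (norm_nonneg A) (le_max_left _ _)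
    -- the key estimate for each m ≥ 1
    have key : ∀ m : ℕ, 1 ≤ m →
        ‖NormedSpace.exp A - NormedSpace.exp B‖
          ≤ Real.exp (((m : ℝ))⁻¹ * M) * ‖A - B‖ := by
      intro m hm
      have hmR : (0 : ℝ) < (m : ℝ) := by exact_mod_cast hm
      set X : Matrix (Fin n) (Fin n) ℝ := ((m : ℝ))⁻¹ • A with hXdef
      set Y : Matrix (Fin n) (Fin n) ℝ := ((m : ℝ))⁻¹ • B with hYdef
      have hXskew : Xᵀ = -X := by rw [hXdef, Matrix.transpose_smul, hA, smul_neg]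
      have hYskew : Yᵀ = -Y := by rw [hYdef, Matrix.transpose_smul, hB, smul_neg]
      have hmX : m • X = A := by
        rw [hXdef, ← Nat.cast_smul_eq_nsmul ℝ, smul_smul, mul_inv_cancel₀ hmR.ne', one_smul]
      have hmY : m • Y = B := by
        rw [hYdef, ← Nat.cast_smul_eq_nsmul ℝ, smul_smul, mul_inv_cancel₀ hmR.ne', one_smul]
      have hexpA : NormedSpace.exp A = (NormedSpace.exp X) ^ m := by
        rw [← hmX, NormedSpace.exp_nsmul]
      have hexpB : NormedSpace.exp B = (NormedSpace.exp Y) ^ m := by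
        rw [← hmY, NormedSpace.exp_nsmul]
      have hnX : ‖NormedSpace.exp X‖ = 1 := norm_exp_eq_one X hXskew
      have hnY : ‖NormedSpace.exp Y‖ = 1 := norm_exp_eq_one Y hYskew
      obtain ⟨k, rfl⟩ := Nat.exists_eq_add_of_le hm
      have hpow := aux_pow_sub_pow (NormedSpace.exp X) (NormedSpace.exp Y) k
      rw [hnX, hnY, max_self, one_pow, mul_one] at hpow
      have hXY : ‖X - Y‖ = ((1 + k : ℕ) : ℝ)⁻¹ * ‖A - B‖ := by
        rw [hXdef, hYdef, ← smul_sub, norm_smul, Real.norm_eq_abs, abs_of_pos (by positivity)]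
      have hmaxXY : max ‖X‖ ‖Y‖ = ((1 + k : ℕ) : ℝ)⁻¹ * M := by
        rw [hXdef, hYdef, norm_smul, norm_smul, Real.norm_eq_abs,
          abs_of_pos (by positivity), hMdef]
        exact (mul_max_of_nonneg _ _ (by positivity)).symm
      have hexp := aux_exp_sub_exp X Y
      rw [hmaxXY, hXY] at hexp
      calc ‖NormedSpace.exp A - NormedSpace.exp B‖
          = ‖(NormedSpace.exp X) ^ (k + 1) - (NormedSpace.exp Y) ^ (k + 1)‖ := by
            rw [hexpA, hexpB, Nat.add_comm 1 k]
        _ ≤ (k + 1) * ‖NormedSpace.exp X - NormedSpace.exp Y‖ := hpow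
        _ ≤ (k + 1) * (Real.exp (((1 + k : ℕ) : ℝ)⁻¹ * M) *
              (((1 + k : ℕ) : ℝ)⁻¹ * ‖A - B‖)) := by
            apply mul_le_mul_of_nonneg_left hexp (by positivity)
        _ = Real.exp (((1 + k : ℕ) : ℝ)⁻¹ * M) * ‖A - B‖ := by
            have hne : ((1 + k : ℕ) : ℝ) ≠ 0 := by positivity
            push_cast
            field_simp
            ring
    -- take the limit m → ∞
    have hlim : Filter.Tendsto (fun m : ℕ => Real.exp (((m : ℝ))⁻¹ * M) * ‖A - B‖)
        Filter.atTop (nhds (‖A - B‖)) := by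
      have h1 : Filter.Tendsto (fun m : ℕ => ((m : ℝ))⁻¹ * M) Filter.atTop (nhds 0) := by
        simpa using (tendsto_inv_atTop_nhds_zero_nat).mul_const M
      have h2 : Filter.Tendsto (fun m : ℕ => Real.exp (((m : ℝ))⁻¹ * M))
          Filter.atTop (nhds 1) := by
        simpa [Function.comp_def] using (Real.continuous_exp.tendsto 0).comp h1
      simpa using h2.mul_const ‖A - B‖
    refine ge_of_tendsto hlim ?_
    filter_upwards [Filter.eventually_ge_atTop 1] with m hm
    exact key m hm
end

section
/- Let J : ℝ^{d₂} → Matrix (Fin d₁) (Fin d₁) ℝ be linear with each J(μ) skew-symmetric, such that dim ker J(μ) is constant for μ ≠ 0 and the nonzero eigenvalues of −J(ω)² are bounded below by c² > 0 uniformly for ω in the unit sphere. Then the map μ ↦ P₀(μ) assigning the orthogonal projection onto ker J(μ) is Lipschitz on the unit sphere: there is κ > 0 with ‖P₀(μ) − P₀(μ')‖ ≤ κ‖J(μ) − J(μ')‖ ≤ κ'|μ − μ'| for all unit vectors μ, μ'. -/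
open Matrix
open scoped Matrix.Norms.L2Operator RealInnerProductSpace

/-- Auxiliary: view a plain vector as an element of Euclidean space. -/
noncomputable def kplEv {d₁ : ℕ} (x : Fin d₁ → ℝ) : EuclideanSpace ℝ (Fin d₁) :=
  (WithLp.equiv 2 (Fin d₁ → ℝ)).symm x

variable {d₁ : ℕ}

lemma myInner_eq_dot (x y : EuclideanSpace ℝ (Fin d₁)) :
    ⟪x, y⟫ = (WithLp.equiv 2 _ x) ⬝ᵥ (WithLp.equiv 2 _ y) := by
  simp [PiLp.inner_apply, dotProduct, RCLike.inner_apply, mul_comm]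

lemma myOpNorm_le (M : Matrix (Fin d₁) (Fin d₁) ℝ) {C : ℝ} (hC : 0 ≤ C)
    (h : ∀ x : EuclideanSpace ℝ (Fin d₁), ‖kplEv (M *ᵥ x)‖ ≤ C * ‖x‖) : ‖M‖ ≤ C := by
  rw [Matrix.l2_opNorm_def]
  exact ContinuousLinearMap.opNorm_le_bound _ hC h

lemma myMulVec_le (M : Matrix (Fin d₁) (Fin d₁) ℝ) (x : EuclideanSpace ℝ (Fin d₁)) :
    ‖kplEv (M *ᵥ x)‖ ≤ ‖M‖ * ‖x‖ := M.l2_opNorm_mulVec x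

lemma myAdj (M : Matrix (Fin d₁) (Fin d₁) ℝ) (x y : EuclideanSpace ℝ (Fin d₁)) :
    ⟪kplEv (M *ᵥ x), y⟫ = ⟪x, kplEv (Mᵀ *ᵥ y)⟫ := by
  simp only [myInner_eq_dot, kplEv, Equiv.apply_symm_apply]
  rw [Matrix.dotProduct_mulVec, Matrix.vecMul_transpose]
  rfl

lemma myProjNorm (P : Matrix (Fin d₁) (Fin d₁) ℝ) (hPsym : Pᵀ = P) (hPidem : P * P = P) :
    ‖P‖ ≤ 1 := by
  apply myOpNorm_le _ zero_le_one
  intro x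
  rw [one_mul]
  rcases eq_or_lt_of_le (norm_nonneg (kplEv (P *ᵥ x))) with h0 | h0
  · rw [← h0]; exact norm_nonneg x
  have key : ‖kplEv (P *ᵥ x)‖ ^ 2 ≤ ‖x‖ * ‖kplEv (P *ᵥ x)‖ := by
    have h1 : ⟪kplEv (P *ᵥ x), kplEv (P *ᵥ x)⟫ = ⟪x, kplEv (P *ᵥ x)⟫ := by
      rw [myAdj, hPsym]
      congr 1
      show kplEv (P *ᵥ (P *ᵥ x)) = kplEv (P *ᵥ x)
      rw [Matrix.mulVec_mulVec, hPidem]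
    calc ‖kplEv (P *ᵥ x)‖ ^ 2 = ⟪kplEv (P *ᵥ x), kplEv (P *ᵥ x)⟫ :=
          (real_inner_self_eq_norm_sq _).symm
      _ = ⟪x, kplEv (P *ᵥ x)⟫ := h1
      _ ≤ ‖x‖ * ‖kplEv (P *ᵥ x)‖ := real_inner_le_norm _ _
  nlinarith [key, h0]

lemma myGap (B : Matrix (Fin d₁) (Fin d₁) ℝ) (hB : B.IsHermitian) (c : ℝ)
    (heig : ∀ (t : ℝ) (v : Fin d₁ → ℝ), v ≠ 0 → B *ᵥ v = t • v → t = 0 ∨ c ^ 2 < t)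
    (w : EuclideanSpace ℝ (Fin d₁))
    (hw : ∀ v : EuclideanSpace ℝ (Fin d₁), B *ᵥ v = 0 → ⟪v, w⟫ = 0) :
    c ^ 2 * ‖w‖ ^ 2 ≤ ⟪w, kplEv (B *ᵥ w)⟫ := by
  set b := hB.eigenvectorBasis with hbdef
  set t := hB.eigenvalues with htdef
  have hBt : Bᵀ = B := by
    rw [← Matrix.conjTranspose_eq_transpose_of_trivial]; exact hB
  have hBb : ∀ i, B *ᵥ (b i) = t i • (b i : EuclideanSpace ℝ (Fin d₁)) := fun i =>
    hB.mulVec_eigenvectorBasis i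
  have hterm : ∀ i, ⟪w, b i⟫ * ⟪b i, kplEv (B *ᵥ w)⟫ = t i * ⟪b i, w⟫ ^ 2 := by
    intro i
    have h1 : ⟪b i, kplEv (B *ᵥ w)⟫ = t i * ⟪b i, w⟫ := by
      rw [real_inner_comm, myAdj, hBt]
      have h2 : kplEv (B *ᵥ (b i)) = t i • (b i : EuclideanSpace ℝ (Fin d₁)) := by
        rw [hBb i]; rfl
      rw [h2, real_inner_smul_right, real_inner_comm]
    rw [h1, real_inner_comm]; ring
  have hsum : ⟪w, kplEv (B *ᵥ w)⟫ = ∑ i, t i * ⟪b i, w⟫ ^ 2 := by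
    rw [← b.sum_inner_mul_inner w (kplEv (B *ᵥ w))]
    exact Finset.sum_congr rfl fun i _ => hterm i
  have hnorm : ‖w‖ ^ 2 = ∑ i, ⟪b i, w⟫ ^ 2 := by
    have := b.sum_inner_mul_inner w w
    rw [real_inner_self_eq_norm_sq] at this
    rw [← this]
    exact Finset.sum_congr rfl fun i _ => by rw [real_inner_comm w (b i)]; ring
  rw [hsum, hnorm, Finset.mul_sum]
  apply Finset.sum_le_sum
  intro i _
  have hne : (b i : Fin d₁ → ℝ) ≠ 0 := by
    intro h
    exact b.orthonormal.ne_zero i (by ext j; exact congrFun h j)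
  rcases heig (t i) (b i) hne (hBb i) with h0 | hlt
  · have hz : ⟪(b i : EuclideanSpace ℝ (Fin d₁)), w⟫ = 0 := by
      apply hw
      rw [hBb i, h0, zero_smul]
    rw [hz, h0]; simp
  · nlinarith [sq_nonneg (⟪(b i : EuclideanSpace ℝ (Fin d₁)), w⟫)]

lemma myHalf (c : ℝ) (hc : 0 < c) (A B P Q : Matrix (Fin d₁) (Fin d₁) ℝ)
    (hPsym : Pᵀ = P) (hPidem : P * P = P) (hQsym : Qᵀ = Q) (hQidem : Q * Q = Q)
    (hAP : ∀ x : Fin d₁ → ℝ, A *ᵥ (P *ᵥ x) = 0)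
    (hBQ : ∀ x : Fin d₁ → ℝ, B *ᵥ (Q *ᵥ x) = 0)
    (hgap : ∀ w : EuclideanSpace ℝ (Fin d₁), Q *ᵥ w = 0 →
      c ^ 2 * ‖w‖ ^ 2 ≤ ⟪w, kplEv (B *ᵥ w)⟫) :
    ‖(1 - Q) * P‖ ≤ ‖B - A‖ / c ^ 2 := by
  apply myOpNorm_le _ (div_nonneg (norm_nonneg _) (by positivity))
  intro x
  set v0 : Fin d₁ → ℝ := P *ᵥ x with hv0
  set w0 : Fin d₁ → ℝ := v0 - Q *ᵥ v0 with hw0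
  have hmv : ((1 - Q) * P) *ᵥ (x : Fin d₁ → ℝ) = w0 := by
    rw [← Matrix.mulVec_mulVec, Matrix.sub_mulVec, Matrix.one_mulVec]
  have hQw : Q *ᵥ w0 = 0 := by
    have h : Q *ᵥ (Q *ᵥ v0) = Q *ᵥ v0 := by rw [Matrix.mulVec_mulVec, hQidem]
    rw [hw0, Matrix.mulVec_sub, h, sub_self]
  have hBw : B *ᵥ w0 = (B - A) *ᵥ v0 := by
    rw [hw0, Matrix.mulVec_sub, hBQ, sub_zero, Matrix.sub_mulVec, hv0, hAP, sub_zero]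
  set w : EuclideanSpace ℝ (Fin d₁) := kplEv w0 with hw
  have hvle : ‖kplEv v0‖ ≤ ‖x‖ := by
    calc ‖kplEv v0‖ ≤ ‖P‖ * ‖x‖ := myMulVec_le P x
      _ ≤ 1 * ‖x‖ := by
          exact mul_le_mul_of_nonneg_right (myProjNorm P hPsym hPidem) (norm_nonneg x)
      _ = ‖x‖ := one_mul _
  have hkey : c ^ 2 * ‖w‖ ^ 2 ≤ ‖B - A‖ * ‖x‖ * ‖w‖ := by
    have h1 : c ^ 2 * ‖w‖ ^ 2 ≤ ⟪w, kplEv (B *ᵥ w)⟫ := hgap w hQw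
    have hBw2 : B *ᵥ (w : Fin d₁ → ℝ) = (B - A) *ᵥ v0 := hBw
    rw [hBw2] at h1
    have h3 : ⟪w, kplEv ((B - A) *ᵥ v0)⟫ ≤ ‖w‖ * (‖B - A‖ * ‖x‖) := by
      calc ⟪w, kplEv ((B - A) *ᵥ v0)⟫ ≤ ‖w‖ * ‖kplEv ((B - A) *ᵥ v0)‖ :=
            real_inner_le_norm _ _
        _ ≤ ‖w‖ * (‖B - A‖ * ‖x‖) := by
            apply mul_le_mul_of_nonneg_left _ (norm_nonneg w)
            calc ‖kplEv ((B - A) *ᵥ v0)‖ ≤ ‖B - A‖ * ‖kplEv v0‖ :=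
                  myMulVec_le (B - A) (kplEv v0)
              _ ≤ ‖B - A‖ * ‖x‖ := mul_le_mul_of_nonneg_left hvle (norm_nonneg _)
    nlinarith [h1, h3]
  have hfinal : ‖w‖ ≤ ‖B - A‖ / c ^ 2 * ‖x‖ := by
    rcases eq_or_lt_of_le (norm_nonneg w) with h0 | h0
    · rw [← h0]; positivity
    · rw [div_mul_eq_mul_div, le_div_iff₀ (by positivity)]
      nlinarith [hkey, h0]
  calc ‖kplEv (((1 - Q) * P) *ᵥ x)‖ = ‖w‖ := by rw [hw]; exact congrArg (fun z => ‖kplEv z‖) hmv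
    _ ≤ ‖B - A‖ / c ^ 2 * ‖x‖ := hfinal

lemma myNormTranspose (M : Matrix (Fin d₁) (Fin d₁) ℝ) : ‖Mᵀ‖ = ‖M‖ := by
  rw [← Matrix.conjTranspose_eq_transpose_of_trivial, Matrix.l2_opNorm_conjTranspose]

/-- Lemma 2.2(2): under constancy of `dim ker J(μ)` and a uniform spectral gap,
the kernel projections `P₀(μ)` are Lipschitz in `μ` on the unit sphere:
`‖P₀(μ) − P₀(μ')‖ ≤ κ‖J(μ) − J(μ')‖ ≤ κ'|μ − μ'|`. -/
theorem kernel_projection_lipschitz {d₁ d₂ : ℕ}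
    (J : EuclideanSpace ℝ (Fin d₂) →ₗ[ℝ] Matrix (Fin d₁) (Fin d₁) ℝ)
    (hskew : ∀ μ, (J μ)ᵀ = -(J μ)) (c : ℝ) (hc : 0 < c)
    (heig : ∀ ω : EuclideanSpace ℝ (Fin d₂), ‖ω‖ = 1 →
      ∀ (t : ℝ) (v : Fin d₁ → ℝ), v ≠ 0 →
        (-(J ω * J ω)).mulVec v = t • v → t = 0 ∨ c ^ 2 < t)
    (hconst : ∀ μ μ' : EuclideanSpace ℝ (Fin d₂), μ ≠ 0 → μ' ≠ 0 →
      Module.finrank ℝ (LinearMap.ker (J μ).mulVecLin) =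
        Module.finrank ℝ (LinearMap.ker (J μ').mulVecLin))
    (P₀ : EuclideanSpace ℝ (Fin d₂) → Matrix (Fin d₁) (Fin d₁) ℝ)
    (hP₀sym : ∀ μ, μ ≠ 0 → (P₀ μ)ᵀ = P₀ μ)
    (hP₀idem : ∀ μ, μ ≠ 0 → P₀ μ * P₀ μ = P₀ μ)
    (hP₀range : ∀ μ, μ ≠ 0 → ∀ x : Fin d₁ → ℝ, (J μ).mulVec ((P₀ μ).mulVec x) = 0)
    (hP₀id : ∀ μ, μ ≠ 0 → ∀ x : Fin d₁ → ℝ, (J μ).mulVec x = 0 → (P₀ μ).mulVec x = x) :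
    ∃ κ κ' : ℝ, 0 < κ ∧ 0 < κ' ∧
      ∀ μ μ' : EuclideanSpace ℝ (Fin d₂), ‖μ‖ = 1 → ‖μ'‖ = 1 →
        ‖P₀ μ - P₀ μ'‖ ≤ κ * ‖J μ - J μ'‖ ∧
        κ * ‖J μ - J μ'‖ ≤ κ' * ‖μ - μ'‖ := by
  classical
  set f := LinearMap.toContinuousLinearMap J with hf
  set K := ‖f‖ with hKdef
  have hK0 : (0 : ℝ) ≤ K := by rw [hKdef]; exact norm_nonneg f
  refine ⟨(4 * K + 1) / c ^ 2, (4 * K + 1) / c ^ 2 * (K + 1), by positivity, by positivity, ?_⟩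
  intro μ μ' hμ hμ'
  have hμ0 : μ ≠ 0 := fun h => by rw [h, norm_zero] at hμ; norm_num at hμ
  have hμ'0 : μ' ≠ 0 := fun h => by rw [h, norm_zero] at hμ'; norm_num at hμ'
  have hJle : ∀ ω : EuclideanSpace ℝ (Fin d₂), ‖ω‖ = 1 → ‖J ω‖ ≤ K := by
    intro ω hω
    have h := f.le_opNorm ω
    rw [hω, mul_one] at h
    simpa [hf] using h
  -- the one-sided bound from `myHalf`
  have main : ∀ ν ν' : EuclideanSpace ℝ (Fin d₂), ‖ν‖ = 1 → ‖ν'‖ = 1 →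
      ‖(1 - P₀ ν') * P₀ ν‖ ≤ ‖(-(J ν' * J ν')) - (-(J ν * J ν))‖ / c ^ 2 := by
    intro ν ν' hν hν'
    have hν0 : ν ≠ 0 := fun h => by rw [h, norm_zero] at hν; norm_num at hν
    have hν'0 : ν' ≠ 0 := fun h => by rw [h, norm_zero] at hν'; norm_num at hν'
    apply myHalf c hc _ _ _ _ (hP₀sym ν hν0) (hP₀idem ν hν0) (hP₀sym ν' hν'0)
      (hP₀idem ν' hν'0)
    · -- A *ᵥ (P *ᵥ x) = 0
      intro x
      rw [← Matrix.neg_mul, ← Matrix.mulVec_mulVec, hP₀range ν hν0 x, Matrix.mulVec_zero]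
    · intro x
      rw [← Matrix.neg_mul, ← Matrix.mulVec_mulVec, hP₀range ν' hν'0 x, Matrix.mulVec_zero]
    · -- the spectral gap
      intro w hQw
      have hBt : (-(J ν' * J ν'))ᵀ = -(J ν' * J ν') := by
        rw [Matrix.transpose_neg, Matrix.transpose_mul, hskew ν', Matrix.neg_mul,
          Matrix.mul_neg, neg_neg]
      have hB : (-(J ν' * J ν')).IsHermitian := by
        show (-(J ν' * J ν'))ᴴ = -(J ν' * J ν')
        rw [Matrix.conjTranspose_eq_transpose_of_trivial, hBt]
      apply myGap _ hB c (heig ν' hν') w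
      intro v hv
      have hJv : J ν' *ᵥ (v : Fin d₁ → ℝ) = 0 := by
        have h1 : ⟪kplEv (J ν' *ᵥ v), kplEv (J ν' *ᵥ v)⟫ = 0 := by
          rw [myAdj, hskew ν']
          show (⟪v, kplEv ((-J ν') *ᵥ (J ν' *ᵥ (v : Fin d₁ → ℝ)))⟫ : ℝ) = 0
          rw [Matrix.mulVec_mulVec, Matrix.neg_mul, hv,
            show kplEv (0 : Fin d₁ → ℝ) = (0 : EuclideanSpace ℝ (Fin d₁)) from rfl,
            inner_zero_right]
        have h3 : kplEv (J ν' *ᵥ (v : Fin d₁ → ℝ)) = kplEv 0 := by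
          rw [inner_self_eq_zero.mp h1]; rfl
        exact (WithLp.equiv 2 (Fin d₁ → ℝ)).symm.injective h3
      have hQv : P₀ ν' *ᵥ (v : Fin d₁ → ℝ) = v := hP₀id ν' hν'0 v hJv
      calc ⟪v, w⟫ = ⟪kplEv (P₀ ν' *ᵥ (v : Fin d₁ → ℝ)), w⟫ :=
            congrArg (fun z => (⟪kplEv z, w⟫ : ℝ)) hQv.symm
        _ = ⟪v, kplEv ((P₀ ν')ᵀ *ᵥ w)⟫ := myAdj _ _ _
        _ = 0 := by
            rw [hP₀sym ν' hν'0, hQw]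
            have : kplEv (0 : Fin d₁ → ℝ) = 0 := rfl
            rw [this, inner_zero_right]
  -- combine the two halves
  set D := ‖J μ - J μ'‖ with hD
  have hD0 : (0 : ℝ) ≤ D := norm_nonneg _
  have hdec : P₀ μ - P₀ μ' = P₀ μ * (1 - P₀ μ') - (1 - P₀ μ) * P₀ μ' := by noncomm_ring
  have h1 : ‖P₀ μ * (1 - P₀ μ')‖ = ‖(1 - P₀ μ') * P₀ μ‖ := by
    rw [← myNormTranspose ((1 - P₀ μ') * P₀ μ), Matrix.transpose_mul, Matrix.transpose_sub,
      Matrix.transpose_one, hP₀sym μ hμ0, hP₀sym μ' hμ'0]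
  have hNdiff : ‖(-(J μ' * J μ')) - (-(J μ * J μ))‖ ≤ 2 * K * D := by
    have he : (-(J μ' * J μ')) - (-(J μ * J μ)) = J μ * (J μ - J μ') + (J μ - J μ') * J μ' := by
      noncomm_ring
    rw [he]
    calc ‖J μ * (J μ - J μ') + (J μ - J μ') * J μ'‖
        ≤ ‖J μ * (J μ - J μ')‖ + ‖(J μ - J μ') * J μ'‖ := norm_add_le _ _
      _ ≤ ‖J μ‖ * ‖J μ - J μ'‖ + ‖J μ - J μ'‖ * ‖J μ'‖ := by
          exact add_le_add (Matrix.l2_opNorm_mul _ _) (Matrix.l2_opNorm_mul _ _)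
      _ ≤ K * D + D * K := by
          exact add_le_add (mul_le_mul_of_nonneg_right (hJle μ hμ) hD0)
            (mul_le_mul_of_nonneg_left (hJle μ' hμ') hD0)
      _ = 2 * K * D := by ring
  have hNdiff' : ‖(-(J μ * J μ)) - (-(J μ' * J μ'))‖ ≤ 2 * K * D := by
    rw [norm_sub_rev]; exact hNdiff
  have hPQ : ‖P₀ μ - P₀ μ'‖ ≤ (4 * K * D) / c ^ 2 := by
    calc ‖P₀ μ - P₀ μ'‖ = ‖P₀ μ * (1 - P₀ μ') - (1 - P₀ μ) * P₀ μ'‖ := by rw [hdec]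
      _ ≤ ‖P₀ μ * (1 - P₀ μ')‖ + ‖(1 - P₀ μ) * P₀ μ'‖ := norm_sub_le _ _
      _ = ‖(1 - P₀ μ') * P₀ μ‖ + ‖(1 - P₀ μ) * P₀ μ'‖ := by rw [h1]
      _ ≤ ‖(-(J μ' * J μ')) - (-(J μ * J μ))‖ / c ^ 2
          + ‖(-(J μ * J μ)) - (-(J μ' * J μ'))‖ / c ^ 2 :=
            add_le_add (main μ μ' hμ hμ') (main μ' μ hμ' hμ)
      _ ≤ (2 * K * D) / c ^ 2 + (2 * K * D) / c ^ 2 := by gcongr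
      _ = (4 * K * D) / c ^ 2 := by ring
  constructor
  · calc ‖P₀ μ - P₀ μ'‖ ≤ (4 * K * D) / c ^ 2 := hPQ
      _ ≤ ((4 * K + 1) * D) / c ^ 2 := by
          rw [div_le_div_iff_of_pos_right (by positivity : (0:ℝ) < c ^ 2)]
          nlinarith [hK0, hD0]
      _ = (4 * K + 1) / c ^ 2 * D := by ring
  · have hDle : D ≤ (K + 1) * ‖μ - μ'‖ := by
      have he : J μ - J μ' = f (μ - μ') := by
        rw [map_sub]; simp [hf]
      calc D = ‖f (μ - μ')‖ := by rw [hD, he]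
        _ ≤ K * ‖μ - μ'‖ := f.le_opNorm _
        _ ≤ (K + 1) * ‖μ - μ'‖ := by
            exact mul_le_mul_of_nonneg_right (by linarith) (norm_nonneg _)
    calc (4 * K + 1) / c ^ 2 * D ≤ (4 * K + 1) / c ^ 2 * ((K + 1) * ‖μ - μ'‖) := by
          exact mul_le_mul_of_nonneg_left hDle (by positivity)
      _ = (4 * K + 1) / c ^ 2 * (K + 1) * ‖μ - μ'‖ := by ring
end
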